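/- arXiv:cs/0605096 — 6 statements merged into one kernel-verified Lean document; each statement's English description precedes it below -/
import Mathlib

section
/- Every rotation of a lexicographically minimal word of prime length that is not a power of a single letter yields a word whose set of rotations is the same as that of the original word; in particular, the minimal rotation of such a word is primitive. -/
lemma aux_exists_add_mod (len j n : ℕ) (h : 0 < len) :
    ∃ i, i < len ∧ (j + i) % len = n % len := by
  refine ⟨(n + (len - j % len)) % len, Nat.mod_lt _ h, ?_⟩
  have h2 : j % len < len := Nat.mod_lt _ h
  have h1 := Nat.mod_add_div j len
  have h3 : len * (j / len + 1) = len * (j / len) + len := by ring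
  have key : j + (n + (len - j % len)) = len * (j / len + 1) + n := by omega
  rw [Nat.add_mod_mod, key, Nat.mul_add_mod]

lemma aux_join_replicate_singleton {α : Type*} (m : ℕ) (a : α) :
    (List.replicate m [a]).flatten = List.replicate m a := by
  induction m with
  | zero => simp
  | succ m ih => simp [List.replicate_succ, ih]

/-- For a lexicographically minimal word of prime length that is not a
power of a single letter: every rotation has the same set of rotations as the
original word, and the word is primitive. -/
theorem minimal_word_rotations_and_primitive {α : Type*} [LinearOrder α]
    (w : List α) (n : ℕ) (hn : w.length = n) (hp : n.Prime)
    (hconst : ¬ ∃ a : α, w = List.replicate n a)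
    (hmin : ∀ j, j < w.length →
      (List.Lex (· < ·) w (w.rotate j) ∨ w = w.rotate j)) :
    (∀ j, ∀ v : List α,
      ((∃ i, i < w.length ∧ v = (w.rotate j).rotate i) ↔
       (∃ i, i < w.length ∧ v = w.rotate i))) ∧
    (∀ (u : List α) (k : ℕ), w = (List.replicate k u).flatten → k = 1) := by
  have hlen : 0 < w.length := by rw [hn]; exact hp.pos
  constructor
  · intro j v
    constructor
    · rintro ⟨i, hi, rfl⟩
      rw [List.rotate_rotate]
      exact ⟨(j + i) % w.length, Nat.mod_lt _ hlen, (List.rotate_mod w (j + i)).symm⟩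
    · rintro ⟨i, hi, rfl⟩
      obtain ⟨i', hi', hmod⟩ := aux_exists_add_mod w.length j i hlen
      refine ⟨i', hi', ?_⟩
      rw [List.rotate_rotate, ← List.rotate_mod w (j + i'), hmod,
        List.rotate_mod]
  · intro u k hk
    have hlen2 : n = k * u.length := by
      have := congrArg List.length hk
      simpa [hn, List.length_flatten, List.map_replicate, List.sum_replicate,
        smul_eq_mul] using this
    have hdvd : k ∣ n := ⟨u.length, hlen2⟩
    rcases hp.eq_one_or_self_of_dvd k hdvd with h1 | h1
    · exact h1
    · exfalso
      have hu1 : u.length = 1 := by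
        have hn0 : 0 < n := hp.pos
        rw [h1] at hlen2
        nlinarith
      obtain ⟨a, ha⟩ := List.length_eq_one_iff.mp hu1
      exact hconst ⟨a, by rw [hk, ha, h1, aux_join_replicate_singleton]⟩
end

section
/- If a word w of prime length n is not a power of a single letter, then the lexicographically smallest rotation of w is a Lyndon word. -/
/-- A word is a Lyndon word iff it is nonempty and strictly lexicographically
smaller than each of its nontrivial rotations. -/
def IsLyndon {α : Type*} [LinearOrder α] (w : List α) : Prop :=
  w ≠ [] ∧ ∀ j, 0 < j → j < w.length → List.Lex (· < ·) w (w.rotate j)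

/-- If a word of prime length is not a power of a single letter, then
its lexicographically smallest rotation is a Lyndon word. -/
theorem min_rotation_isLyndon {α : Type*} [LinearOrder α]
    (w : List α) (n : ℕ) (hn : w.length = n) (hp : n.Prime)
    (hconst : ¬ ∃ a : α, w = List.replicate n a) :
    ∀ j, j < w.length →
      (∀ i, i < w.length →
        (List.Lex (· < ·) (w.rotate j) (w.rotate i) ∨ w.rotate j = w.rotate i)) →
      IsLyndon (w.rotate j) := by
  intro j hj hmin
  have hnpos : 0 < n := hp.pos
  have hne : w ≠ [] := by
    intro h; simp [h] at hn; omega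
  constructor
  · simpa using hne
  · intro k hk hk'
    have hlen : (w.rotate j).length = n := by simp [hn]
    rw [hlen] at hk'
    have hrot : (w.rotate j).rotate k = w.rotate ((j + k) % n) := by
      rw [List.rotate_rotate, ← List.rotate_mod, hn]
    have hlt : (j + k) % n < w.length := by
      rw [hn]; exact Nat.mod_lt _ hnpos
    rcases hmin _ hlt with h | h
    · rwa [← hrot] at h
    · exfalso
      -- w.rotate j is fixed by rotation by k, 0 < k < n, n prime ⇒ w constant
      set v := w.rotate j with hv
      have hvk : v.rotate k = v := by rw [hrot, ← h]
      have hvmk : ∀ m : ℕ, v.rotate (k * m) = v := by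
        intro m
        induction m with
        | zero => simp
        | succ m ih =>
          rw [Nat.mul_succ, ← List.rotate_rotate, ih, hvk]
      have hcop : Nat.Coprime k n :=
        Nat.Coprime.symm (hp.coprime_iff_not_dvd.mpr fun hd => by
          have := Nat.le_of_dvd hk hd; omega)
      have h1n : 1 < n := hp.one_lt
      obtain ⟨m, -, hm⟩ := Nat.exists_mul_mod_eq_one_of_coprime hcop h1n
      have h1 : v.rotate 1 = v := by
        have := hvmk m
        rwa [← List.rotate_mod, hlen, hm] at this
      have : Nonempty α := ⟨w.head hne⟩
      obtain ⟨a, ha⟩ := List.rotate_one_eq_self_iff_eq_replicate.mp h1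
      rw [hlen] at ha
      apply hconst
      refine ⟨a, ?_⟩
      have : w.rotate (j + (n - j)) = w := by
        have : j + (n - j) = w.length := by omega
        rw [this, List.rotate_length]
      rw [← this, ← List.rotate_rotate, ← hv, ha, List.rotate_replicate]
end

section
/- A nonempty word w has at most one rotation that is a Lyndon word; i.e., if R_i(w) and R_j(w) are both Lyndon words with 1 ≤ i, j ≤ |w|, then R_i(w) = R_j(w). -/
/-- A nonempty word has at most one rotation that is a Lyndon word. -/
theorem lyndon_rotation_unique {α : Type*} [LinearOrder α]
    (w : List α) (hw : w ≠ []) (i j : ℕ)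
    (hi : i < w.length) (hj : j < w.length)
    (hLi : IsLyndon (w.rotate i)) (hLj : IsLyndon (w.rotate j)) :
    w.rotate i = w.rotate j := by
  set n := w.length with hn
  have hn0 : 0 < n := List.length_pos_iff.mpr hw
  set u := w.rotate i with hu
  have hulen : u.length = n := by simp [hu, hn]
  set k := (j + n - i) % n with hk
  have hkn : k < n := Nat.mod_lt _ hn0
  have huk : u.rotate k = w.rotate j := by
    rw [hu, hk, ← hulen]
    rw [List.rotate_mod, List.rotate_rotate, hulen]
    have : i + (j + n - i) = j + n := by omega
    rw [this]
    rw [← List.rotate_rotate]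
    have : (w.rotate j).length = n := by simp [hn]
    rw [← this, List.rotate_length]
  rcases Nat.eq_zero_or_pos k with hk0 | hkpos
  · rw [← huk, hk0, List.rotate_zero]
  · exfalso
    have h1 : List.Lex (· < ·) u (w.rotate j) := by
      rw [← huk]; exact hLi.2 k hkpos (by rw [hulen]; exact hkn)
    have h2 : List.Lex (· < ·) (w.rotate j) u := by
      have hvu : (w.rotate j).rotate (n - k) = u := by
        rw [← huk, List.rotate_rotate]
        have : k + (n - k) = n := by omega
        rw [this, ← hulen, List.rotate_length]
      rw [← hvu]
      exact hLj.2 (n - k) (by omega) (by simp [hn]; omega)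
    exact Std.Asymm.asymm (r := List.Lex (· < ·)) _ _ h1 h2
end

section
/- Let w be a word of prime length n that is not a power of a single letter. Then there is exactly one index i in 1..n such that R_i(w) is a Lyndon word. -/
lemma rotate_mul_eq_self {α : Type*} (l : List α) (j : ℕ) (h : l.rotate j = l) :
    ∀ k, l.rotate (j * k) = l := by
  intro k
  induction k with
  | zero => simp
  | succ k ih => rw [Nat.mul_succ, ← List.rotate_rotate, ih, h]

lemma const_of_rotate_fix {α : Type*} (l : List α) (n j : ℕ) (hl : l.length = n)
    (hp : n.Prime) (hj0 : 0 < j) (hjn : j < n) (h : l.rotate j = l) :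
    ∃ a : α, l = List.replicate n a := by
  have hcop : Nat.Coprime j n :=
    Nat.coprime_comm.mp (hp.coprime_iff_not_dvd.mpr
      (fun hd => absurd (Nat.le_of_dvd hj0 hd) (not_le.mpr hjn)))
  obtain ⟨k, -, hk⟩ := Nat.exists_mul_mod_eq_one_of_coprime hcop hp.one_lt
  have h1 : l.rotate 1 = l := by
    have h2 := rotate_mul_eq_self l j h k
    rwa [← List.rotate_mod, hl, hk] at h2
  have hne : Nonempty α := by
    rcases l with _ | ⟨a, t⟩
    · exfalso; simp at hl; omega
    · exact ⟨a⟩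
  obtain ⟨a, ha⟩ := List.rotate_one_eq_self_iff_eq_replicate.mp h1
  exact ⟨a, by rwa [hl] at ha⟩

/-- A word of prime length that is not a power of a single letter has
exactly one rotation index yielding a Lyndon word. -/
theorem existsUnique_lyndon_rotation {α : Type*} [LinearOrder α]
    (w : List α) (n : ℕ) (hn : w.length = n) (hp : n.Prime)
    (hconst : ¬ ∃ a : α, w = List.replicate n a) :
    ∃! i : ℕ, i < n ∧ IsLyndon (w.rotate i) := by
  have hn0 : 0 < n := hp.pos
  -- if a rotation of w is constant, then w is constant
  have hwrot : ∀ i a, w.rotate i ≠ List.replicate n a := by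
    intro i a hi
    apply hconst
    refine ⟨a, ?_⟩
    have hkey : (w.rotate (i % w.length)).rotate (w.length - i % w.length) = w := by
      rw [List.rotate_rotate, Nat.add_sub_cancel' (le_of_lt (Nat.mod_lt _ (by omega))),
        List.rotate_length]
    rw [← hkey, List.rotate_mod, hi, List.rotate_replicate]
  -- no nontrivial rotation fixes a rotation of w
  have hfix : ∀ i j, 0 < j → j < n → (w.rotate i).rotate j ≠ w.rotate i := by
    intro i j hj0 hjn h
    obtain ⟨a, ha⟩ := const_of_rotate_fix (w.rotate i) n j (by simp [hn]) hp hj0 hjn h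
    exact hwrot i a ha
  -- a Lyndon rotation is Lex-smaller than every distinct rotation index < n
  have key : ∀ a b : ℕ, a < n → b < n → a ≠ b → IsLyndon (w.rotate a) →
      List.Lex (· < ·) (w.rotate a) (w.rotate b) := by
    rintro a b ha hb hab ⟨-, hL⟩
    set j := (b + n - a) % n with hj
    have hjlt : j < n := Nat.mod_lt _ hn0
    have hj0 : 0 < j := by
      rcases Nat.eq_zero_or_pos j with h0 | h0
      · exfalso
        have hdvd : n ∣ (b + n - a) := Nat.dvd_of_mod_eq_zero h0
        rcases Nat.lt_or_ge (b + n - a) n with hc | hc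
        · have := Nat.eq_zero_of_dvd_of_lt hdvd hc
          omega
        · have hdvd' : n ∣ (b + n - a) - n := Nat.dvd_sub hdvd dvd_rfl
          have := Nat.eq_zero_of_dvd_of_lt hdvd' (by omega)
          omega
      · exact h0
    have harith : (a + j) % n = b % n := by
      rw [hj, Nat.add_mod_mod]
      have h2 : a + (b + n - a) = b + n := by omega
      rw [h2, Nat.add_mod_right]
    have hrot : (w.rotate a).rotate j = w.rotate b := by
      rw [List.rotate_rotate, ← List.rotate_mod, hn, harith, ← hn, List.rotate_mod]
    have := hL j hj0 (by rw [List.length_rotate, hn]; exact hjlt)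
    rwa [hrot] at this
  obtain ⟨i, hi_mem, hmin⟩ := Finset.exists_min_image (Finset.range n)
    (fun i => w.rotate i) ⟨0, Finset.mem_range.mpr hn0⟩
  rw [Finset.mem_range] at hi_mem
  have hwne : w.rotate i ≠ [] := by
    intro h
    have := congrArg List.length h
    simp [hn] at this; omega
  refine ⟨i, ⟨hi_mem, hwne, ?_⟩, ?_⟩
  · -- Lyndon condition
    intro j hj0 hjn
    rw [List.length_rotate, hn] at hjn
    have hm : (i + j) % n < n := Nat.mod_lt _ hn0
    have hrot : (w.rotate i).rotate j = w.rotate ((i + j) % n) := by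
      rw [List.rotate_rotate, ← List.rotate_mod, hn]
    have hle : w.rotate i ≤ w.rotate ((i + j) % n) :=
      hmin _ (Finset.mem_range.mpr hm)
    have hne : w.rotate i ≠ w.rotate ((i + j) % n) := fun h =>
      hfix i j hj0 hjn (hrot.trans h.symm)
    rw [hrot]
    exact lt_of_le_of_ne hle hne
  · -- uniqueness
    rintro i' ⟨hi', hL'⟩
    by_contra hii
    have h1 := key i' i hi' hi_mem hii hL'
    have h2 := key i i' hi_mem hi' (fun h => hii h.symm) ⟨hwne, ?_⟩
    · exact absurd h2 (asymm h1)
    · intro j hj0 hjn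
      rw [List.length_rotate, hn] at hjn
      have hm : (i + j) % n < n := Nat.mod_lt _ hn0
      have hrot : (w.rotate i).rotate j = w.rotate ((i + j) % n) := by
        rw [List.rotate_rotate, ← List.rotate_mod, hn]
      have hle : w.rotate i ≤ w.rotate ((i + j) % n) :=
        hmin _ (Finset.mem_range.mpr hm)
      have hne : w.rotate i ≠ w.rotate ((i + j) % n) := fun h =>
        hfix i j hj0 hjn (hrot.trans h.symm)
      rw [hrot]
      exact lt_of_le_of_ne hle hne
end

section
/- Let w be a word of prime length n that is not a power of a single letter, and let w̄ denote its reversal. Then the unique rotation of w that is a Lyndon word and the unique rotation of w̄ that is a Lyndon word start at distinct positions of the underlying circular word; i.e., if R_i(w) is a Lyndon word and R_j(w̄) is a Lyndon word where w̄ is the reversal of w, then the corresponding starting indices on the circular sequence are different. Equivalently, there is no word u of length ≥ 2 such that both u and its reversal are Lyndon words. -/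
private lemma lex_head_le' {α : Type*} [LinearOrder α] {x y : α} {xs ys : List α}
    (h : List.Lex (· < ·) (x :: xs) (y :: ys)) : x ≤ y := by
  cases h with
  | rel h => exact le_of_lt h
  | cons h => exact le_rfl

private lemma not_lex_aux {α : Type*} [LinearOrder α] (a : α) :
    ∀ s : List α, (∀ c ∈ s, a ≤ c) → ¬ List.Lex (· < ·) (s ++ [a]) (a :: s) := by
  intro s
  induction s with
  | nil =>
    intro _ h
    cases h with
    | rel h => exact lt_irrefl a h
    | cons h => cases h
  | cons c s' ih =>
    intro hmin h
    cases h with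
    | rel h => exact absurd h (not_lt.mpr (hmin c List.mem_cons_self))
    | cons h => exact ih (fun x hx => hmin x (List.mem_cons_of_mem _ hx)) h

private lemma lyndon_head_min {α : Type*} [LinearOrder α] {u : List α}
    (hu : IsLyndon u) {c : α} (hc : c ∈ u) : u.head hu.1 ≤ c := by
  obtain ⟨k, hk, rfl⟩ := List.mem_iff_getElem.mp hc
  rcases Nat.eq_zero_or_pos k with rfl | hkpos
  · exact le_of_eq (List.getElem_zero _).symm
  · have hlex := hu.2 k hkpos hk
    have hne : u ≠ [] := hu.1
    have hne' : u.rotate k ≠ [] := by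
      simpa [← List.length_pos_iff, List.length_rotate] using List.length_pos_iff.mpr hne
    have h1 : 0 < (u.rotate k).length := List.length_pos_iff.mpr hne'
    have h0 : (u.rotate k).head hne' = u[k] := by
      rw [← List.getElem_zero h1]
      simpa [Nat.mod_eq_of_lt hk] using List.getElem_rotate u k 0 h1
    have hlex' : List.Lex (· < ·) (u.head hne :: u.tail)
        ((u.rotate k).head hne' :: (u.rotate k).tail) := by
      rw [List.cons_head_tail, List.cons_head_tail]; exact hlex
    have := lex_head_le' hlex'
    rw [h0] at this
    exact this

private lemma no_lyndon_reverse {α : Type*} [LinearOrder α] {u : List α}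
    (h2 : 2 ≤ u.length) (hu : IsLyndon u) (hur : IsLyndon u.reverse) : False := by
  have hne : u ≠ [] := hu.1
  obtain ⟨x, t, rfl⟩ := List.exists_cons_of_ne_nil hne
  have htne : t ≠ [] := by
    intro h; subst h; simp at h2
  obtain ⟨s, b, rfl⟩ := (List.eq_nil_or_concat' t).resolve_left htne
  -- the head is the minimum letter
  have hmin : ∀ c ∈ x :: (s ++ [b]), x ≤ c := by
    intro c hc
    simpa using lyndon_head_min hu (c := c) hc
  -- the last letter is also a minimum (from the reverse being Lyndon)
  have hmin' : ∀ c ∈ x :: (s ++ [b]), b ≤ c := by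
    intro c hc
    have := lyndon_head_min hur (c := c) (by simp only [List.mem_reverse]; exact hc)
    rw [List.head_reverse] at this
    simpa [List.getLast_append] using this
  have hbx : b = x := le_antisymm (hmin' x (by simp)) (hmin b (by simp))
  subst hbx
  -- Lyndon condition at rotation n-1
  have hlen : (b :: (s ++ [b])).length = s.length + 2 := by simp
  have hlex := hu.2 (s.length + 1) (by omega) (by omega)
  have hrot : (b :: (s ++ [b])).rotate (s.length + 1) = b :: b :: s := by
    rw [List.rotate_eq_drop_append_take (by simp)]
    rw [List.drop_succ_cons, List.take_succ_cons, List.drop_left, List.take_left]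
    simp
  rw [hrot] at hlex
  cases hlex with
  | rel h => exact lt_irrefl b h
  | cons h =>
    exact not_lex_aux b s (fun c hc => hmin c (by simp [hc])) h

/-- For a word of prime length not all of whose letters are equal,
the unique Lyndon rotation of w and the unique Lyndon rotation of its reversal
start at distinct positions of the underlying circular word: the reverse of the
Lyndon rotation of w is not the Lyndon rotation of the reversal. -/
theorem lyndon_rotation_of_reverse_distinct {α : Type*} [LinearOrder α]
    (w : List α) (n : ℕ) (hn : w.length = n) (hp : n.Prime)
    (hconst : ¬ ∃ a : α, w = List.replicate n a)
    (i j : ℕ) (hi : i < n) (hj : j < n)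
    (hLi : IsLyndon (w.rotate i)) (hLj : IsLyndon (w.reverse.rotate j)) :
    (w.rotate i).reverse ≠ w.reverse.rotate j := by
  intro heq
  rw [← heq] at hLj
  have h2 : 2 ≤ (w.rotate i).length := by
    rw [List.length_rotate, hn]; exact hp.two_le
  exact no_lyndon_reverse h2 hLi hLj
end

section
/- A word w is a Lyndon word (strictly smaller than all its nontrivial rotations) if and only if w is nonempty and strictly smaller in lexicographic order than each of its proper nonempty suffixes. -/
private theorem lex_append_decompose {α : Type*} [LinearOrder α] :
    ∀ {s t u : List α}, List.Lex (· < ·) s (t ++ u) →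
      List.Lex (· < ·) s t ∨ t <+: s
  | s, [], u, _ => Or.inr (List.nil_prefix)
  | [], b :: t, u, _ => Or.inl List.Lex.nil
  | a :: s, b :: t, u, h => by
    cases h with
    | rel hr => exact Or.inl (List.Lex.rel hr)
    | cons h' =>
      rcases lex_append_decompose h' with h'' | hp
      · exact Or.inl (List.Lex.cons h'')
      · obtain ⟨r, rfl⟩ := hp
        exact Or.inr ⟨r, rfl⟩

private theorem lex_append_cancel {α : Type*} [LinearOrder α] :
    ∀ (t : List α) {s u : List α}, List.Lex (· < ·) (t ++ s) (t ++ u) →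
      List.Lex (· < ·) s u
  | [], s, u, h => h
  | a :: t, s, u, h => lex_append_cancel t ((List.lex_cons_iff).1 h)

private theorem lex_append_of_le_length {α : Type*} [LinearOrder α] :
    ∀ {s t : List α} (u v : List α), List.Lex (· < ·) s t → t.length ≤ s.length →
      List.Lex (· < ·) (s ++ u) (t ++ v)
  | s, t, u, v, h, hl => by
    induction h with
    | nil => simp at hl
    | @rel a s' b t' hr => exact List.Lex.rel hr
    | @cons a s' t' h' ih =>
      exact List.Lex.cons (ih (by simpa using hl))

/-- A word is a Lyndon word (smaller than all nontrivial rotations)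
iff it is nonempty and strictly smaller than each of its proper nonempty suffixes. -/
theorem lyndon_iff_lt_suffixes {α : Type*} [LinearOrder α] (w : List α) :
    IsLyndon w ↔
      (w ≠ [] ∧ ∀ j, 0 < j → j < w.length → List.Lex (· < ·) w (w.drop j)) := by
  constructor
  · rintro ⟨hne, h⟩
    refine ⟨hne, fun j hj hjl => ?_⟩
    have hrot := h j hj hjl
    rw [List.rotate_eq_drop_append_take hjl.le] at hrot
    rcases lex_append_decompose hrot with h1 | hp
    · exact h1
    · exfalso
      -- drop j is a prefix of w : w = drop j ++ z
      obtain ⟨z, hz⟩ := hp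
      have hzlen : z.length = j := by
        have := congrArg List.length hz
        simp [List.length_drop] at this
        omega
      -- from Lex w (drop j ++ take j) and w = drop j ++ z : Lex z (take j)
      have h2 : List.Lex (· < ·) z (w.take j) := by
        apply lex_append_cancel (w.drop j)
        rw [hz]; exact hrot
      -- rotation by w.length - j is z ++ drop j
      have hk1 : 0 < w.length - j := by omega
      have hk2 : w.length - j < w.length := by omega
      have hrot2 := h (w.length - j) hk1 hk2
      rw [List.rotate_eq_drop_append_take hk2.le] at hrot2
      have hdlen : (w.drop j).length = w.length - j := by simp
      have hd : w.drop (w.length - j) = z := by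
        have := List.drop_left (l₁ := w.drop j) (l₂ := z)
        rwa [hz, hdlen] at this
      have ht : w.take (w.length - j) = w.drop j := by
        have := List.take_left (l₁ := w.drop j) (l₂ := z)
        rwa [hz, hdlen] at this
      rw [hd, ht] at hrot2
      -- hrot2 : Lex w (z ++ drop j); but Lex (z ++ drop j) w since z < take j with equal length
      have h3 : List.Lex (· < ·) (z ++ w.drop j) (w.take j ++ w.drop j) := by
        apply lex_append_of_le_length _ _ h2
        rw [hzlen, List.length_take]; omega
      rw [List.take_append_drop] at h3
      exact asymm hrot2 h3
  · rintro ⟨hne, h⟩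
    refine ⟨hne, fun j hj hjl => ?_⟩
    rw [List.rotate_eq_drop_append_take hjl.le]
    exact List.Lex.append_right _ _ (h j hj hjl)
end
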